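/- For all real numbers $v > 0$ and $\theta > 0$, one has $\sum_{k \ge (1+\theta)v} \frac{v^k}{k!} < \frac{\sqrt{1+\theta}}{\theta\sqrt{2\pi v}} \exp\big((R(\theta)+1)v\big)$, where $R(\theta) = \theta - (\theta+1)\log(\theta+1)$. -/

import Mathlib

open Real Filter Finset Topology

lemma sqrt_pi_le_stirlingSeq (n : ℕ) : Real.sqrt Real.pi ≤ Stirling.stirlingSeq (n + 1) := by
  have h := Stirling.stirlingSeq'_antitone
  have ht : Tendsto (Stirling.stirlingSeq ∘ Nat.succ) atTop (𝓝 (Real.sqrt Real.pi)) :=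
    Stirling.tendsto_stirlingSeq_sqrt_pi.comp (tendsto_add_atTop_nat 1)
  exact h.le_of_tendsto ht n

lemma stirling_lower (n : ℕ) (hn : 1 ≤ n) :
    Real.sqrt (2 * Real.pi * n) * ((n : ℝ) / Real.exp 1) ^ n ≤ (Nat.factorial n : ℝ) := by
  obtain ⟨k, rfl⟩ := Nat.exists_eq_add_of_le' hn
  have h := sqrt_pi_le_stirlingSeq k
  rw [Stirling.stirlingSeq] at h
  have hpos : 0 < Real.sqrt (2 * (k + 1 : ℕ)) * (((k + 1 : ℕ) : ℝ) / Real.exp 1) ^ (k + 1) := by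
    positivity
  rw [le_div_iff₀ hpos] at h
  calc Real.sqrt (2 * Real.pi * (k + 1 : ℕ)) * (((k + 1 : ℕ) : ℝ) / Real.exp 1) ^ (k + 1)
      = Real.sqrt Real.pi * (Real.sqrt (2 * (k + 1 : ℕ)) * (((k + 1 : ℕ) : ℝ) / Real.exp 1) ^ (k + 1)) := by
        rw [show (2 : ℝ) * Real.pi * (k + 1 : ℕ) = Real.pi * (2 * (k + 1 : ℕ)) by ring,
          Real.sqrt_mul Real.pi_pos.le]
        ring
    _ ≤ ((Nat.factorial (k+1) : ℕ) : ℝ) := h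

lemma key_deriv (v : ℝ) (hv : 0 < v) (x : ℝ) (hx : 0 < x) :
    HasDerivAt (fun y : ℝ => y * (1 + Real.log v - Real.log y))
      (Real.log v - Real.log x) x := by
  have h2 : HasDerivAt (fun y : ℝ => y * Real.log y) (Real.log x + 1) x := by
    have := (hasDerivAt_id x).mul (Real.hasDerivAt_log hx.ne')
    convert this using 1
    · rfl
    · rfl
    · rfl
    · simp [hx.ne']
  have h1 : HasDerivAt (fun y : ℝ => y * (1 + Real.log v)) (1 + Real.log v) x :=
    hasDerivAt_mul_const _
  have h := h1.sub h2
  have heq : (fun y : ℝ => y * (1 + Real.log v - Real.log y))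
      = fun y : ℝ => y * (1 + Real.log v) - y * Real.log y := by funext y; ring
  rw [heq, show Real.log v - Real.log x = 1 + Real.log v - (Real.log x + 1) by ring]
  exact h

lemma key_mono (v c x : ℝ) (hv : 0 < v) (hc : v ≤ c) (hx : c ≤ x) :
    x * (1 + Real.log v - Real.log x) ≤ c * (1 + Real.log v - Real.log c) := by
  have hlog : ContinuousOn Real.log (Set.Ici v) :=
    Real.continuousOn_log.mono (fun y hy => by
      simp only [Set.mem_compl_iff, Set.mem_singleton_iff]
      exact (hv.trans_le hy).ne')
  have hcont : ContinuousOn (fun y : ℝ => y * (1 + Real.log v - Real.log y)) (Set.Ici v) :=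
    continuousOn_id.mul (continuousOn_const.sub hlog)
  have hanti : AntitoneOn (fun y : ℝ => y * (1 + Real.log v - Real.log y)) (Set.Ici v) := by
    apply antitoneOn_of_deriv_nonpos (convex_Ici v) hcont
    · intro y hy
      rw [interior_Ici] at hy
      exact (key_deriv v hv y (hv.trans hy)).differentiableAt.differentiableWithinAt
    · intro y hy
      rw [interior_Ici] at hy
      rw [(key_deriv v hv y (hv.trans hy)).deriv]
      have := Real.log_le_log hv hy.le
      linarith
  exact hanti hc (hc.trans hx) hx

lemma pow_div_factorial_le (v θ : ℝ) (hv : 0 < v) (hθ : 0 < θ) (m : ℕ) (hm : 1 ≤ m)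
    (hmv : (1 + θ) * v ≤ (m : ℝ)) :
    v ^ m / (Nat.factorial m : ℝ) ≤
      Real.exp ((1 + θ) * (1 - Real.log (1 + θ)) * v) /
        Real.sqrt (2 * Real.pi * ((1 + θ) * v)) := by
  have hmR : (0 : ℝ) < m := Nat.cast_pos.mpr hm
  have hst := stirling_lower m hm
  have hpos : (0 : ℝ) < Real.sqrt (2 * Real.pi * m) * ((m : ℝ) / Real.exp 1) ^ m := by
    positivity
  have hA : v ^ m / (Nat.factorial m : ℝ)
      ≤ v ^ m / (Real.sqrt (2 * Real.pi * m) * ((m : ℝ) / Real.exp 1) ^ m) :=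
    div_le_div_of_nonneg_left (by positivity) hpos hst
  have hexp : v ^ m / ((m : ℝ) / Real.exp 1) ^ m
      = Real.exp ((m : ℝ) * (1 + Real.log v - Real.log m)) := by
    have h1 : Real.exp (1 + Real.log v - Real.log m) = v / ((m : ℝ) / Real.exp 1) := by
      rw [Real.exp_sub, Real.exp_add, Real.exp_log hv, Real.exp_log hmR]
      field_simp
    rw [show ((m : ℝ) * (1 + Real.log v - Real.log m))
        = ((m : ℕ) : ℝ) * (1 + Real.log v - Real.log m) from rfl,
      Real.exp_nat_mul, h1, div_pow, div_pow]
    rw [div_pow]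
  have hvc : v ≤ (1 + θ) * v := by nlinarith
  have hkey := key_mono v ((1 + θ) * v) (m : ℝ) hv hvc hmv
  have hc : ((1 + θ) * v) * (1 + Real.log v - Real.log ((1 + θ) * v))
      = (1 + θ) * (1 - Real.log (1 + θ)) * v := by
    rw [Real.log_mul (by positivity) hv.ne']
    ring
  have hB : v ^ m / (Real.sqrt (2 * Real.pi * m) * ((m : ℝ) / Real.exp 1) ^ m)
      ≤ Real.exp ((1 + θ) * (1 - Real.log (1 + θ)) * v) /
        Real.sqrt (2 * Real.pi * ((1 + θ) * v)) := by
    rw [show v ^ m / (Real.sqrt (2 * Real.pi * m) * ((m : ℝ) / Real.exp 1) ^ m)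
        = (v ^ m / ((m : ℝ) / Real.exp 1) ^ m) / Real.sqrt (2 * Real.pi * m) by ring,
      hexp]
    apply div_le_div₀ (Real.exp_nonneg _)
    · rw [Real.exp_le_exp]
      calc (m : ℝ) * (1 + Real.log v - Real.log m)
          ≤ ((1 + θ) * v) * (1 + Real.log v - Real.log ((1 + θ) * v)) := hkey
        _ = _ := hc
    · positivity
    · apply Real.sqrt_le_sqrt
      nlinarith [Real.pi_pos]
  exact hA.trans hB



/-- Norton's upper-truncation estimate: for `v, θ > 0`,
`∑_{k ≥ (1+θ)v} v^k/k! < (√(1+θ)/(θ √(2πv))) exp((R(θ)+1) v)`,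
where `R t = t - (t+1) log(t+1)`. -/
theorem norton_upper_truncation (v θ : ℝ) (hv : 0 < v) (hθ : 0 < θ)
    (R : ℝ → ℝ) (hR : ∀ t : ℝ, R t = t - (t + 1) * Real.log (t + 1)) :
    ∑' k : ℕ, (if (1 + θ) * v ≤ (k : ℝ) then v ^ k / (Nat.factorial k : ℝ) else 0)
      < (Real.sqrt (1 + θ) / (θ * Real.sqrt (2 * Real.pi * v))) *
          Real.exp ((R θ + 1) * v) := by
  set m := ⌈(1 + θ) * v⌉₊ with hmdef
  have hc0 : 0 < (1 + θ) * v := by positivity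
  have hm0 : 1 ≤ m := Nat.one_le_iff_ne_zero.mpr (Nat.ceil_pos.mpr hc0).ne'
  have hmv : (1 + θ) * v ≤ (m : ℝ) := Nat.le_ceil _
  have hmR : (0 : ℝ) < m := Nat.cast_pos.mpr hm0
  have hvm : v < (m : ℝ) := by nlinarith
  have hs0 : Summable (fun k : ℕ => v ^ k / (Nat.factorial k : ℝ)) :=
    Real.summable_pow_div_factorial v
  set f : ℕ → ℝ := fun k =>
    if (1 + θ) * v ≤ (k : ℝ) then v ^ k / (Nat.factorial k : ℝ) else 0 with hfdef
  have hf0 : ∀ k, 0 ≤ f k := by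
    intro k; rw [hfdef]; dsimp only; split <;> positivity
  have hfle : ∀ k, f k ≤ v ^ k / (Nat.factorial k : ℝ) := by
    intro k; rw [hfdef]; dsimp only; split
    · exact le_refl _
    · positivity
  have hfs : Summable f := hs0.of_nonneg_of_le hf0 hfle
  have hsplit := (Summable.sum_add_tsum_nat_add m hfs).symm
  have hzero : ∑ i ∈ Finset.range m, f i = 0 := by
    apply Finset.sum_eq_zero
    intro i hi
    rw [hfdef]; dsimp only
    rw [if_neg (not_le.mpr (Nat.lt_ceil.mp (Finset.mem_range.mp hi)))]
  have hshift : ∀ i : ℕ, f (i + m) = v ^ (i + m) / (Nat.factorial (i + m) : ℝ) := by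
    intro i; rw [hfdef]; dsimp only
    rw [if_pos]
    calc (1 + θ) * v ≤ (m : ℝ) := hmv
      _ ≤ ((i + m : ℕ) : ℝ) := by exact_mod_cast Nat.le_add_left m i
  -- geometric comparison
  set g : ℕ → ℝ := fun i => (v ^ m / (Nat.factorial m : ℝ)) * (v / m) ^ i with hgdef
  have hr0 : (0 : ℝ) ≤ v / m := by positivity
  have hr1 : v / (m : ℝ) < 1 := (div_lt_one hmR).mpr hvm
  have hgs : Summable g := (summable_geometric_of_lt_one hr0 hr1).mul_left _
  have hgle : ∀ i : ℕ, f (i + m) ≤ g i := by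
    intro i
    rw [hshift i, hgdef]; dsimp only
    have hfact : ((Nat.factorial m : ℕ) : ℝ) * (m : ℝ) ^ i ≤ (Nat.factorial (i + m) : ℝ) := by
      have h1 : Nat.factorial m * m ^ i ≤ Nat.factorial (m + i) := by
        calc Nat.factorial m * m ^ i ≤ Nat.factorial m * (m + 1) ^ i := by
              exact Nat.mul_le_mul_left _ (Nat.pow_le_pow_left (Nat.le_succ m) i)
          _ ≤ Nat.factorial (m + i) := Nat.factorial_mul_pow_le_factorial
      rw [add_comm i m]
      exact_mod_cast h1
    have heq : (v ^ m / (Nat.factorial m : ℝ)) * (v / m) ^ i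
        = v ^ (i + m) / ((Nat.factorial m : ℝ) * (m : ℝ) ^ i) := by
      rw [div_pow, pow_add]
      field_simp
    rw [heq]
    apply div_le_div_of_nonneg_left (by positivity) (by positivity) hfact
  have hglt : f (1 + m) < g 1 := by
    rw [hshift 1, hgdef]; dsimp only
    have heq : (v ^ m / (Nat.factorial m : ℝ)) * (v / m) ^ 1
        = v ^ (1 + m) / ((m : ℝ) * (Nat.factorial m : ℝ)) := by
      rw [pow_one, pow_add, pow_one]
      field_simp
    rw [heq]
    apply div_lt_div_of_pos_left (by positivity) (by positivity)
    have : (Nat.factorial (1 + m) : ℝ) = ((m : ℝ) + 1) * (Nat.factorial m : ℝ) := by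
      rw [add_comm 1 m, Nat.factorial_succ]
      push_cast; ring
    rw [this]
    have hfpos : (0 : ℝ) < (Nat.factorial m : ℝ) := by positivity
    nlinarith
  have hlt : ∑' i : ℕ, f (i + m) < ∑' i : ℕ, g i :=
    Summable.tsum_lt_tsum_of_nonneg (fun i => hf0 _) hgle hglt hgs
  have hgsum : ∑' i : ℕ, g i = (v ^ m / (Nat.factorial m : ℝ)) * (1 - v / m)⁻¹ := by
    rw [hgdef]
    rw [tsum_mul_left, tsum_geometric_of_lt_one hr0 hr1]
  -- bound the closed form
  have hinv : (1 - v / (m : ℝ))⁻¹ ≤ (1 + θ) / θ := by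
    have h1 : v / (m : ℝ) ≤ 1 / (1 + θ) := by
      rw [div_le_div_iff₀ hmR (by positivity)]
      nlinarith
    have h2 : θ / (1 + θ) ≤ 1 - v / m := by
      have : θ / (1 + θ) = 1 - 1 / (1 + θ) := by field_simp; ring
      linarith
    rw [show (1 + θ) / θ = (θ / (1 + θ))⁻¹ by rw [inv_div]]
    exact inv_anti₀ (by positivity) h2
  have hpow := pow_div_factorial_le v θ hv hθ m hm0 hmv
  have hfinal : (v ^ m / (Nat.factorial m : ℝ)) * (1 - v / m)⁻¹
      ≤ (Real.exp ((1 + θ) * (1 - Real.log (1 + θ)) * v) /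
          Real.sqrt (2 * Real.pi * ((1 + θ) * v))) * ((1 + θ) / θ) := by
    apply mul_le_mul hpow hinv (inv_nonneg.mpr (by linarith [hr1])) (by positivity)
  -- identify the right-hand side
  have hrhs : (Real.exp ((1 + θ) * (1 - Real.log (1 + θ)) * v) /
          Real.sqrt (2 * Real.pi * ((1 + θ) * v))) * ((1 + θ) / θ)
      = (Real.sqrt (1 + θ) / (θ * Real.sqrt (2 * Real.pi * v))) *
          Real.exp ((R θ + 1) * v) := by
    have hexp : (R θ + 1) * v = (1 + θ) * (1 - Real.log (1 + θ)) * v := by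
      rw [hR θ]
      rw [show θ + 1 = 1 + θ by ring]
      ring
    rw [hexp]
    set E := Real.exp ((1 + θ) * (1 - Real.log (1 + θ)) * v) with hE
    have hsq : Real.sqrt (2 * Real.pi * ((1 + θ) * v))
        = Real.sqrt (1 + θ) * Real.sqrt (2 * Real.pi * v) := by
      rw [show 2 * Real.pi * ((1 + θ) * v) = (1 + θ) * (2 * Real.pi * v) by ring,
        Real.sqrt_mul (by positivity)]
    rw [hsq]
    have hs : Real.sqrt (1 + θ) * Real.sqrt (1 + θ) = 1 + θ :=
      Real.mul_self_sqrt (by positivity)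
    have hs0 : (0 : ℝ) < Real.sqrt (1 + θ) := Real.sqrt_pos.mpr (by positivity)
    have hw0 : (0 : ℝ) < Real.sqrt (2 * Real.pi * v) := Real.sqrt_pos.mpr (by positivity)
    field_simp
    linear_combination (-E) * hs
  calc ∑' k : ℕ, f k = ∑ i ∈ Finset.range m, f i + ∑' i : ℕ, f (i + m) := hsplit
    _ = ∑' i : ℕ, f (i + m) := by rw [hzero, zero_add]
    _ < ∑' i : ℕ, g i := hlt
    _ = (v ^ m / (Nat.factorial m : ℝ)) * (1 - v / m)⁻¹ := hgsum
    _ ≤ _ := hfinal.trans_eq hrhs
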